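/- Let R be a commutative ring with 1 and τ a symmetric relation on R^# such that R is τ-U-refinable. If R is a τ-U-BFR, then R satisfies τ-U-ACCP: there is no infinite properly ascending chain of principal ideals (a₁) ⊊ (a₂) ⊊ ⋯ with each a_{i+1} an essential divisor in some τ-U-factorization of aᵢ. -/

import Mathlib

/-- `x` is a nonzero nonunit, i.e. an element of `R^#`. -/
def NNU {R : Type*} [CommRing R] (x : R) : Prop := x ≠ 0 ∧ ¬ IsUnit x

/-- `R` is présimplifiable: `x = x*y` implies `x = 0` or `y` is a unit. -/
def Presimplifiable (R : Type*) [CommRing R] : Prop :=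
  ∀ x y : R, x = x * y → x = 0 ∨ IsUnit y

/-- `R` is a strongly associate ring: `(a) = (b)` implies `a = u*b` for some unit `u`. -/
def StronglyAssociateRing (R : Type*) [CommRing R] : Prop :=
  ∀ a b : R, Ideal.span ({a} : Set R) = Ideal.span {b} → ∃ u : R, IsUnit u ∧ a = u * b

variable {R : Type*} [CommRing R]

/-- `a = u * ines.prod * ess.prod` is a U-factorization: the members of `ines`
(the inessential divisors) and `ess` (the essential divisors) are nonzero nonunits,
each inessential divisor `x` satisfies `(x * ess.prod) = (ess.prod)`, and omitting
any essential divisor changes the ideal generated by the product of the essential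
divisors. -/
def IsUFact (a u : R) (ines ess : List R) : Prop :=
  IsUnit u ∧ (∀ x ∈ ines, NNU x) ∧ (∀ x ∈ ess, NNU x) ∧
    a = u * ines.prod * ess.prod ∧
    (∀ x ∈ ines, Ideal.span ({x * ess.prod} : Set R) = Ideal.span ({ess.prod} : Set R)) ∧
    (∀ j < ess.length,
      Ideal.span ({ess.prod} : Set R) ≠ Ideal.span ({(ess.eraseIdx j).prod} : Set R))

/-- `a = u * l.prod` is a τ-factorization: `u` is a unit, the factors are nonzero
nonunits, and distinct factors are τ-related. -/
def IsTauFact (τ : R → R → Prop) (a u : R) (l : List R) : Prop :=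
  IsUnit u ∧ (∀ x ∈ l, NNU x) ∧ a = u * l.prod ∧ l.Pairwise τ

/-- A τ-U-factorization: a U-factorization whose underlying factorization is a
τ-factorization. -/
def IsTauUFact (τ : R → R → Prop) (a u : R) (ines ess : List R) : Prop :=
  IsUFact a u ines ess ∧ (ines ++ ess).Pairwise τ

/-- `a` is τ-irreducible: `a` is a nonunit and every τ-factorization of `a`
contains a factor generating the same principal ideal as `a`. -/
def TauIrred (τ : R → R → Prop) (a : R) : Prop :=
  ¬ IsUnit a ∧ ∀ u l, IsTauFact τ a u l →
    ∃ b ∈ l, Ideal.span ({a} : Set R) = Ideal.span ({b} : Set R)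

/-- `b` τ-divides `a`: `b` occurs as a factor in some τ-factorization of `a`. -/
def TauDivides (τ : R → R → Prop) (b a : R) : Prop :=
  ∃ u l, IsTauFact τ a u l ∧ b ∈ l

/-- `b` is an essential divisor in some τ-U-factorization of `a`. -/
def IsEssTauUDivisor (τ : R → R → Prop) (b a : R) : Prop :=
  ∃ u ines ess, IsTauUFact τ a u ines ess ∧ b ∈ ess

/-- `R` is a τ-BFR: every nonunit has a bound on the number of factors in any
τ-factorization. -/
def TauBFR (τ : R → R → Prop) : Prop :=
  ∀ a : R, ¬ IsUnit a → ∃ N : ℕ, ∀ u l, IsTauFact τ a u l → l.length ≤ N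

/-- `R` is a τ-U-BFR: every nonunit has a bound on the number of essential
divisors in any τ-U-factorization. -/
def TauUBFR (τ : R → R → Prop) : Prop :=
  ∀ a : R, ¬ IsUnit a → ∃ N : ℕ, ∀ u ines ess, IsTauUFact τ a u ines ess → ess.length ≤ N

/-- `R` is τ-présimplifiable: the only τ-factorizations of `x` containing `x`
as a factor are the trivial ones `x = λ * x`. -/
def TauPresimplifiable (τ : R → R → Prop) : Prop :=
  ∀ (x u : R) (l : List R), IsTauFact τ x u l → x ∈ l → l = [x]

/-- `R` is τ-U-présimplifiable: every τ-U-factorization of every nonzero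
nonunit has no nonunit inessential divisors. -/
def TauUPresimplifiable (τ : R → R → Prop) : Prop :=
  ∀ a : R, a ≠ 0 → ¬ IsUnit a →
    ∀ u ines ess, IsTauUFact τ a u ines ess → ∀ x ∈ ines, IsUnit x

/-- τ is refinable: replacing a factor of a τ-factorization by one of its own
τ-factorizations again yields a τ-factorization. -/
def TauRefinable (τ : R → R → Prop) : Prop :=
  ∀ (a u b u' : R) (l₁ l₂ m : List R),
    IsTauFact τ a u (l₁ ++ b :: l₂) → IsTauFact τ b u' m →
      IsTauFact τ a (u * u') (l₁ ++ m ++ l₂)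

/-- `R` is τ-U-refinable: refining an essential divisor of a τ-U-factorization by
one of its own τ-U-factorizations again yields a τ-U-factorization. -/
def TauURefinable (τ : R → R → Prop) : Prop :=
  ∀ (a u b u' : R) (ines ines' ess' e₁ e₂ : List R),
    IsTauUFact τ a u ines (e₁ ++ b :: e₂) → IsTauUFact τ b u' ines' ess' →
      IsTauUFact τ a (u * u') (ines ++ ines') (e₁ ++ ess' ++ e₂)

/-- `R` satisfies τ-ACCP. -/
def TauACCP (τ : R → R → Prop) : Prop :=
  ¬ ∃ c : ℕ → R, (∀ i, Ideal.span ({c i} : Set R) < Ideal.span ({c (i + 1)} : Set R)) ∧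
      ∀ i, TauDivides τ (c (i + 1)) (c i)

/-- `R` satisfies τ-U-ACCP. -/
def TauUACCP (τ : R → R → Prop) : Prop :=
  ¬ ∃ c : ℕ → R, (∀ i, Ideal.span ({c i} : Set R) < Ideal.span ({c (i + 1)} : Set R)) ∧
      ∀ i, IsEssTauUDivisor τ (c (i + 1)) (c i)

/-- `a ≅ b`: very strong associates. -/
def VSAssoc (a b : R) : Prop :=
  Ideal.span ({a} : Set R) = Ideal.span ({b} : Set R) ∧
    ((a = 0 ∧ b = 0) ∨ ∀ r : R, a = r * b → IsUnit r)

/-- `a` is τ-very strongly atomic: `a ≅ a`, `a` is a nonunit, and every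
τ-factorization of `a` is trivial. -/
def TauVSAtomic (τ : R → R → Prop) (a : R) : Prop :=
  ¬ IsUnit a ∧ VSAssoc a a ∧ ∀ u l, IsTauFact τ a u l → l.length = 1

/-- Two lists agree up to rearrangement and associates. -/
def AssocPerm (l l' : List R) : Prop :=
  ∃ l'' : List R, l'.Perm l'' ∧
    List.Forall₂ (fun x y => Ideal.span ({x} : Set R) = Ideal.span ({y} : Set R)) l l''

/-- The product relation `τ_×` on a product of rings: coordinates are related
whenever both are nonunits. -/
def TauX {ι : Type*} {S : ι → Type*} [∀ i, CommRing (S i)]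
    (τ : ∀ i, S i → S i → Prop) (a b : ∀ i, S i) : Prop :=
  ∀ i, ¬ IsUnit (a i) → ¬ IsUnit (b i) → τ i (a i) (b i)


lemma prod_mul_dvd_of_forall {b : R} :
    ∀ l : List R, (∀ x ∈ l, x * b ∣ b) → l.prod * b ∣ b := by
  intro l
  induction l with
  | nil => simp
  | cons x t ih =>
    intro hl
    have ht : t.prod * b ∣ b := ih (fun y hy => hl y (List.mem_cons_of_mem _ hy))
    calc (x :: t).prod * b = x * (t.prod * b) := by rw [List.prod_cons, mul_assoc]
      _ ∣ x * b := mul_dvd_mul_left x ht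
      _ ∣ b := hl x (List.mem_cons_self)

lemma span_eq_of_ufact_single {a u b : R} {ines : List R}
    (h : IsUFact a u ines [b]) : Ideal.span ({a} : Set R) = Ideal.span ({b} : Set R) := by
  obtain ⟨hu, _, _, heq, hine, _⟩ := h
  simp only [List.prod_singleton] at heq hine
  have hdvd : ines.prod * b ∣ b :=
    prod_mul_dvd_of_forall ines (fun x hx =>
      Ideal.span_singleton_le_span_singleton.mp (hine x hx).ge)
  apply le_antisymm
  · exact Ideal.span_singleton_le_span_singleton.mpr ⟨u * ines.prod, by rw [heq]; ring⟩
  · refine Ideal.span_singleton_le_span_singleton.mpr (Dvd.dvd.trans ?_ hdvd)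
    refine ⟨↑hu.unit⁻¹, ?_⟩
    have h1 : u * (↑hu.unit⁻¹ : R) = 1 := hu.mul_val_inv
    rw [heq]
    linear_combination (-(ines.prod * b)) * h1

/-- If `R` is τ-U-refinable and a τ-U-BFR, then `R` satisfies τ-U-ACCP. -/
theorem stmt12 {R : Type*} [CommRing R] (τ : R → R → Prop) (hsym : Symmetric τ)
    (hsub : ∀ x y : R, τ x y → NNU x ∧ NNU y) (href : TauURefinable τ)
    (h : TauUBFR τ) :
    TauUACCP τ := by
  rintro ⟨c, hlt, hdiv⟩
  -- build τ-U-factorizations of `c 0` with arbitrarily many essential divisors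
  have key : ∀ k : ℕ, ∃ u ines ess, IsTauUFact τ (c 0) u ines ess ∧
      c (k + 1) ∈ ess ∧ k + 1 ≤ ess.length := by
    intro k
    induction k with
    | zero =>
      obtain ⟨u, ines, ess, hf, hm⟩ := hdiv 0
      exact ⟨u, ines, ess, hf, hm, List.length_pos_iff.mpr (List.ne_nil_of_mem hm)⟩
    | succ k ih =>
      obtain ⟨u, ines, ess, hf, hm, hlen⟩ := ih
      obtain ⟨u', ines', ess', hf', hm'⟩ := hdiv (k + 1)
      obtain ⟨e₁, e₂, rfl⟩ := List.append_of_mem hm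
      have hnew := href (c 0) u (c (k + 1)) u' ines ines' ess' e₁ e₂ hf hf'
      refine ⟨u * u', ines ++ ines', e₁ ++ ess' ++ e₂, hnew,
        by simp [hm'], ?_⟩
      have h2 : 2 ≤ ess'.length := by
        by_contra hcon
        push_neg at hcon
        interval_cases hl : ess'.length
        · exact (List.length_pos_iff.mpr (List.ne_nil_of_mem hm')).ne' hl
        · obtain ⟨x, rfl⟩ := List.length_eq_one_iff.mp hl
          have hx : x = c (k + 2) := (List.mem_singleton.mp hm').symm
          subst hx
          exact (hlt (k + 1)).ne (span_eq_of_ufact_single hf'.1)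
      have hold : e₁.length + 1 + e₂.length = (e₁ ++ c (k + 1) :: e₂).length := by
        simp; omega
      simp only [List.length_append]
      omega
  -- `c 0` is a nonunit
  obtain ⟨u0, ines0, ess0, hf0, hm0, _⟩ := key 0
  have hnu : ¬ IsUnit (c 0) := by
    intro hc
    obtain ⟨_, _, hess, heq, _, _⟩ := hf0.1
    rw [heq] at hc
    have : IsUnit ess0.prod := isUnit_of_mul_isUnit_right hc
    exact (hess _ hm0).2 (isUnit_of_dvd_unit (List.dvd_prod hm0) this)
  obtain ⟨N, hN⟩ := h (c 0) hnu
  obtain ⟨u, ines, ess, hf, _, hlen⟩ := key N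
  exact absurd (hN u ines ess hf) (by omega)
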